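/- Let d > 0, a, b real with d·a > b ≥ 0 and a ≥ 0. Then the impulse response of F⁻¹(s) = (s+a)/(ds+b), namely g(t) = (1/d)·δ(t) + ((a − b/d)/d)·e^(−(b/d)t), has nonnegative (indeed positive) density part, so every state-space realization of F⁻¹ is externally positive, while no state-space realization of F(s) = (ds+b)/(s+a) is externally positive since its impulse-response density (b − da)·e^(−at) is negative for all t ≥ 0. -/

import Mathlib

theorem stmt9 (a d b : ℝ) (hd : 0 < d) (ha : 0 ≤ a) (hb : 0 ≤ b) (hba : b < d * a) :
    (∀ t : ℝ, 0 ≤ t → 0 < ((a - b / d) / d) * Real.exp (-(b / d) * t)) ∧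
    (∀ t : ℝ, 0 ≤ t → (b - d * a) * Real.exp (-a * t) < 0) := by
  constructor
  · intro t ht
    have h1 : 0 < a - b / d := by
      rw [sub_pos, div_lt_iff₀ hd]; linarith [hba]
    exact mul_pos (div_pos h1 hd) (Real.exp_pos _)
  · intro t ht
    exact mul_neg_of_neg_of_pos (by linarith) (Real.exp_pos _)
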